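/- Power sets exist for well-founded extensional apgs: for any well-founded extensional apg X (on a type in a fixed universe) there exists a well-founded extensional apg P (on a type in the same universe) such that for every well-founded extensional apg W, W ⋿ P if and only if every well-founded extensional apg Z with Z ⋿ W also satisfies Z ⋿ X. -/

import Mathlib

universe u v

/-- A relation is (inductively) well-founded if every inductive subset is the whole type:
`S` is inductive when `x ∈ S` whenever every child of `x` is in `S`. -/
def IsWFRel {X : Type u} (r : X → X → Prop) : Prop :=
  ∀ S : Set X, (∀ x, (∀ y, r y x → y ∈ S) → x ∈ S) → S = Set.univ

/-- A relation is extensional if nodes with the same children are equal. -/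
def IsExtRel {X : Type u} (r : X → X → Prop) : Prop :=
  ∀ x y, (∀ z, r z x ↔ r z y) → x = y

/-- `Below r x` is the full subgraph `X/x` of nodes admitting a (possibly empty) path to `x`. -/
def Below {X : Type u} (r : X → X → Prop) (x : X) : Type u :=
  {z : X // Relation.ReflTransGen r z x}

/-- The induced relation on the subgraph `X/x`. -/
def belowRel {X : Type u} (r : X → X → Prop) (x : X) :
    Below r x → Below r x → Prop :=
  fun a b => r a.1 b.1

/-- The root of the pointed subgraph `X/x`. -/
def belowRoot {X : Type u} (r : X → X → Prop) (x : X) : Below r x :=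
  ⟨x, Relation.ReflTransGen.refl⟩

/-- Isomorphism of pointed graphs: a relation-preserving-and-reflecting bijection
taking the first distinguished point to the second. -/
def PIso {X : Type u} {Y : Type v} (rX : X → X → Prop) (rY : Y → Y → Prop)
    (x : X) (y : Y) : Prop :=
  ∃ f : X ≃ Y, (∀ a b, rX a b ↔ rY (f a) (f b)) ∧ f x = y

/-- A simulation of graphs. -/
def IsSimulation {X : Type u} {Y : Type v} (rX : X → X → Prop)
    (rY : Y → Y → Prop) (f : X → Y) : Prop :=
  (∀ a b, rX a b → rY (f a) (f b)) ∧
  (∀ x y, rY y (f x) → ∃ a, rX a x ∧ f a = y)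

/-- A bisimulation between graphs. -/
def IsBisimulation {X : Type u} {Y : Type v} (rX : X → X → Prop)
    (rY : Y → Y → Prop) (R : X → Y → Prop) : Prop :=
  ∀ x y, R x y →
    (∀ x', rX x' x → ∃ y', rY y' y ∧ R x' y') ∧
    (∀ y', rY y' y → ∃ x', rX x' x ∧ R x' y')

/-- A bi-entire relation. -/
def BiEntire {X : Type u} {Y : Type v} (R : X → Y → Prop) : Prop :=
  (∀ x, ∃ y, R x y) ∧ (∀ y, ∃ x, R x y)

/-- A well-founded extensional accessible pointed graph ("apg") on a type in universe `u`. -/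
structure WEApg : Type (u + 1) where
  carrier : Type u
  rel : carrier → carrier → Prop
  root : carrier
  acc : ∀ x, Relation.ReflTransGen rel x root
  wf : IsWFRel rel
  ext : IsExtRel rel

/-- Isomorphism of (the underlying pointed graphs of) apgs. -/
def WEApg.Iso (X Y : WEApg.{u}) : Prop :=
  PIso X.rel Y.rel X.root Y.root

/-- Membership of the pointed graph `(W, rW, w)` in the pointed graph `(Y, rY, y)`:
`(W, rW, w)` is isomorphic as a pointed graph to `(Y, rY)/z` for some child `z` of `y`. -/
def MemPGAt {W : Type u} {Y : Type v} (rW : W → W → Prop) (w : W)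
    (rY : Y → Y → Prop) (y : Y) : Prop :=
  ∃ z, rY z y ∧ PIso rW (belowRel rY z) w (belowRoot rY z)

/-- `X ⋿ Y` for apgs: `X` is isomorphic as a pointed graph to `Y/y` for some member
(child of the root) `y` of `Y`. -/
def WEApg.Mem (X Y : WEApg.{u}) : Prop :=
  MemPGAt X.rel X.root Y.rel Y.root


/-! ### Auxiliary development -/

section Aux

theorem wellFounded_of_isWFRel {X : Type u} {r : X → X → Prop} (h : IsWFRel r) :
    WellFounded r := by
  have hu := h {x | Acc r x} fun x hx => Acc.intro x hx
  refine ⟨fun x => ?_⟩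
  have hx : x ∈ ({x | Acc r x} : Set X) := by rw [hu]; trivial
  exact hx

theorem isWFRel_of_wellFounded {X : Type u} {r : X → X → Prop} (h : WellFounded r) :
    IsWFRel r := fun S hS =>
  Set.eq_univ_of_forall fun x => h.induction x fun x ih => hS x ih

/-- The Mostowski-style collapse of a well-founded graph into pre-sets. -/
noncomputable def toPSet {X : Type u} (r : X → X → Prop) (wf : WellFounded r) : X → PSet.{u} :=
  wf.fix fun x ih => PSet.mk { y // r y x } fun y => ih y.1 y.2

theorem toPSet_eq {X : Type u} (r : X → X → Prop) (wf : WellFounded r) (x : X) :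
    toPSet r wf x = PSet.mk { y // r y x } (fun y => toPSet r wf y.1) :=
  wf.fix_eq _ x

theorem mem_toPSet_iff {X : Type u} {r : X → X → Prop} {wf : WellFounded r} {x : X}
    {t : PSet.{u}} : t ∈ toPSet r wf x ↔ ∃ y, r y x ∧ PSet.Equiv t (toPSet r wf y) := by
  rw [toPSet_eq]
  constructor
  · rintro ⟨a, ha⟩
    exact ⟨a.1, a.2, ha⟩
  · rintro ⟨y, hy, h⟩
    exact ⟨⟨y, hy⟩, h⟩

theorem toPSet_inj {X : Type u} {r : X → X → Prop} (wf : WellFounded r) (ext : IsExtRel r) :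
    ∀ x y, PSet.Equiv (toPSet r wf x) (toPSet r wf y) → x = y := by
  intro x
  induction x using wf.induction with
  | _ x ih =>
  intro y h
  refine ext x y fun z => ⟨fun hz => ?_, fun hz => ?_⟩
  · have h1 : toPSet r wf z ∈ toPSet r wf x := mem_toPSet_iff.2 ⟨z, hz, PSet.Equiv.refl _⟩
    have h2 := (PSet.Mem.congr_right h).1 h1
    obtain ⟨w, hw, hzw⟩ := mem_toPSet_iff.1 h2
    exact (ih z hz w hzw) ▸ hw
  · have h1 : toPSet r wf z ∈ toPSet r wf y := mem_toPSet_iff.2 ⟨z, hz, PSet.Equiv.refl _⟩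
    have h2 := (PSet.Mem.congr_right h).2 h1
    obtain ⟨w, hw, hzw⟩ := mem_toPSet_iff.1 h2
    exact (ih w hw z hzw.symm) ▸ hw

theorem equiv_toPSet_of_piso {X Y : Type u} {rX : X → X → Prop} {rY : Y → Y → Prop}
    (wfX : WellFounded rX) (wfY : WellFounded rY) (f : X ≃ Y)
    (hf : ∀ a b, rX a b ↔ rY (f a) (f b)) :
    ∀ x, PSet.Equiv (toPSet rX wfX x) (toPSet rY wfY (f x)) := by
  intro x
  induction x using wfX.induction with
  | _ x ih =>
  rw [toPSet_eq, toPSet_eq]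
  refine ⟨fun a => ⟨⟨f a.1, (hf a.1 x).1 a.2⟩, ih a.1 a.2⟩, fun b => ?_⟩
  have hb : rX (f.symm b.1) x := (hf _ x).2 (by simpa using b.2)
  exact ⟨⟨f.symm b.1, hb⟩, by simpa using ih _ hb⟩

theorem piso_of_equiv {X Y : Type u} {rX : X → X → Prop} {rY : Y → Y → Prop}
    (wfX : WellFounded rX) (wfY : WellFounded rY)
    (extX : IsExtRel rX) (extY : IsExtRel rY) {x0 : X} {y0 : Y}
    (accX : ∀ a, Relation.ReflTransGen rX a x0) (accY : ∀ b, Relation.ReflTransGen rY b y0)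
    (h : PSet.Equiv (toPSet rX wfX x0) (toPSet rY wfY y0)) : PIso rX rY x0 y0 := by
  classical
  set R : X → Y → Prop := fun x y => PSet.Equiv (toPSet rX wfX x) (toPSet rY wfY y) with hR
  have uniqY : ∀ {x : X} {y y' : Y}, R x y → R x y' → y = y' := fun hxy hxy' =>
    toPSet_inj wfY extY _ _ (hxy.symm.trans hxy')
  have uniqX : ∀ {x x' : X} {y : Y}, R x y → R x' y → x = x' := fun hxy hx'y =>
    toPSet_inj wfX extX _ _ (hxy.trans hx'y.symm)
  have stepF : ∀ {x : X} {y : Y} {x' : X}, R x y → rX x' x → ∃ y', rY y' y ∧ R x' y' := by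
    intro x y x' hxy hx'
    have h1 : toPSet rX wfX x' ∈ toPSet rY wfY y :=
      (PSet.Mem.congr_right hxy).1 (mem_toPSet_iff.2 ⟨x', hx', PSet.Equiv.refl _⟩)
    obtain ⟨y', hy', he⟩ := mem_toPSet_iff.1 h1
    exact ⟨y', hy', he⟩
  have stepB : ∀ {x : X} {y y' : Y}, R x y → rY y' y → ∃ x', rX x' x ∧ R x' y' := by
    intro x y y' hxy hy'
    have h1 : toPSet rY wfY y' ∈ toPSet rX wfX x :=
      (PSet.Mem.congr_right hxy).2 (mem_toPSet_iff.2 ⟨y', hy', PSet.Equiv.refl _⟩)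
    obtain ⟨x', hx', he⟩ := mem_toPSet_iff.1 h1
    exact ⟨x', hx', he.symm⟩
  have totX : ∀ x, ∃ y, R x y := by
    intro x
    induction accX x using Relation.ReflTransGen.head_induction_on with
    | refl => exact ⟨y0, h⟩
    | head hac hcb ih =>
      obtain ⟨y, hy⟩ := ih
      obtain ⟨y', _, hy'⟩ := stepF hy hac
      exact ⟨y', hy'⟩
  have totY : ∀ y, ∃ x, R x y := by
    intro y
    induction accY y using Relation.ReflTransGen.head_induction_on with
    | refl => exact ⟨x0, h⟩
    | head hac hcb ih =>
      obtain ⟨x, hx⟩ := ih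
      obtain ⟨x', _, hx'⟩ := stepB hx hac
      exact ⟨x', hx'⟩
  choose f hf using totX
  choose g hg using totY
  have gf : ∀ x, g (f x) = x := fun x => uniqX (hg (f x)) (hf x)
  have fg : ∀ y, f (g y) = y := fun y => uniqY (hf (g y)) (hg y)
  refine ⟨⟨f, g, gf, fg⟩, fun a b => ⟨fun hab => ?_, fun hab => ?_⟩, uniqY (hf x0) h⟩
  · obtain ⟨y', hy', hR'⟩ := stepF (hf b) hab
    have e : f a = y' := uniqY (hf a) hR'
    show rY (f a) (f b)
    rw [e]; exact hy'
  · obtain ⟨x', hx', hR'⟩ := stepB (hf b) hab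
    have e : x' = a := uniqX hR' (hf a)
    rwa [e] at hx'

/-! ### Subgraph lemmas -/

theorem below_wf {X : Type u} {r : X → X → Prop} (wf : WellFounded r) (z : X) :
    WellFounded (belowRel r z) :=
  InvImage.wf Subtype.val wf

theorem below_acc' {X : Type u} {r : X → X → Prop} (z : X) (a : Below r z) :
    Relation.ReflTransGen (belowRel r z) a (belowRoot r z) := by
  obtain ⟨v, hv⟩ := a
  induction hv using Relation.ReflTransGen.head_induction_on with
  | refl => exact Relation.ReflTransGen.refl
  | head h' hp ih =>
    exact Relation.ReflTransGen.head
      (show belowRel r z ⟨_, Relation.ReflTransGen.head h' hp⟩ ⟨_, hp⟩ from h') ih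

theorem below_ext {X : Type u} {r : X → X → Prop} (ext : IsExtRel r) (z : X) :
    IsExtRel (belowRel r z) := by
  intro a b h
  apply Subtype.ext
  apply ext
  intro w
  constructor
  · intro hw
    exact (h ⟨w, Relation.ReflTransGen.head hw a.2⟩).1 hw
  · intro hw
    exact (h ⟨w, Relation.ReflTransGen.head hw b.2⟩).2 hw

theorem below_toPSet {X : Type u} {r : X → X → Prop} (wf : WellFounded r) (z : X)
    (a : Below r z) :
    PSet.Equiv (toPSet (belowRel r z) (below_wf wf z) a) (toPSet r wf a.1) := by
  induction a using (below_wf wf z).induction with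
  | _ a ih =>
  rw [toPSet_eq, toPSet_eq]
  refine ⟨fun c => ⟨⟨c.1.1, c.2⟩, ih c.1 c.2⟩, fun y => ?_⟩
  exact ⟨⟨⟨y.1, Relation.ReflTransGen.head y.2 a.2⟩, y.2⟩, ih _ y.2⟩

/-! ### apg glue -/

theorem WEApg.wf' (W : WEApg.{u}) : WellFounded W.rel := wellFounded_of_isWFRel W.wf

noncomputable def WEApg.pset (W : WEApg.{u}) : PSet.{u} := toPSet W.rel W.wf' W.root

noncomputable def WEApg.zf (W : WEApg.{u}) : ZFSet.{u} := ZFSet.mk W.pset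

noncomputable def WEApg.below (Y : WEApg.{u}) (z : Y.carrier) : WEApg.{u} where
  carrier := Below Y.rel z
  rel := belowRel Y.rel z
  root := belowRoot Y.rel z
  acc := below_acc' z
  wf := isWFRel_of_wellFounded (below_wf Y.wf' z)
  ext := below_ext Y.ext z

theorem WEApg.below_zf (Y : WEApg.{u}) (z : Y.carrier) :
    (Y.below z).zf = ZFSet.mk (toPSet Y.rel Y.wf' z) :=
  ZFSet.sound (below_toPSet Y.wf' z (belowRoot Y.rel z))

theorem WEApg.below_mem (Y : WEApg.{u}) {z : Y.carrier} (hz : Y.rel z Y.root) :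
    (Y.below z).Mem Y :=
  ⟨z, hz, Equiv.refl _, fun _ _ => Iff.rfl, rfl⟩

theorem WEApg.mem_iff_zf (W Y : WEApg.{u}) : W.Mem Y ↔ W.zf ∈ Y.zf := by
  constructor
  · rintro ⟨z, hz, f, hf, hroot⟩
    have h1 : PSet.Equiv (toPSet W.rel W.wf' W.root)
        (toPSet (belowRel Y.rel z) (below_wf Y.wf' z) (belowRoot Y.rel z)) := by
      have h0 := equiv_toPSet_of_piso W.wf' (below_wf Y.wf' z) f hf W.root
      rwa [hroot] at h0
    have h2 := below_toPSet Y.wf' z (belowRoot Y.rel z)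
    have h3 : W.pset ∈ toPSet Y.rel Y.wf' Y.root :=
      mem_toPSet_iff.2 ⟨z, hz, h1.trans h2⟩
    exact ZFSet.mk_mem_iff.2 h3
  · intro h
    obtain ⟨z, hz, he⟩ := mem_toPSet_iff.1 (ZFSet.mk_mem_iff.1 h)
    have h2 := (below_toPSet Y.wf' z (belowRoot Y.rel z)).symm
    have h3 : PSet.Equiv W.pset
        (toPSet (belowRel Y.rel z) (below_wf Y.wf' z) (belowRoot Y.rel z)) := he.trans h2
    exact ⟨z, hz, piso_of_equiv W.wf' (below_wf Y.wf' z) W.ext (below_ext Y.ext z)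
      W.acc (below_acc' z) h3⟩

/-! ### From a pre-set to an apg -/

/-- Positions (iterated members) of a pre-set; `none` is the root. -/
def Pos : PSet.{u} → Type u
  | ⟨α, A⟩ => Option ((a : α) × Pos (A a))

/-- The value (as a ZFC set) of a position. -/
def posVal : (s : PSet.{u}) → Pos s → ZFSet.{u}
  | ⟨α, A⟩, none => ZFSet.mk ⟨α, A⟩
  | ⟨_, A⟩, some ⟨a, p⟩ => posVal (A a) p

/-- The root position. -/
def posRoot : (s : PSet.{u}) → Pos s
  | ⟨_, _⟩ => none

theorem posVal_posRoot : ∀ s : PSet.{u}, posVal s (posRoot s) = ZFSet.mk s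
  | ⟨_, _⟩ => rfl

theorem posVal_complete : ∀ (s : PSet.{u}) (p : Pos s) (t : ZFSet.{u}), t ∈ posVal s p →
    ∃ q : Pos s, posVal s q = t
  | ⟨α, A⟩, none, t, ht => by
    obtain ⟨a, ha⟩ : ∃ a, t = ZFSet.mk (A a) := by
      have h1 : t.out ∈ (⟨α, A⟩ : PSet.{u}) := ZFSet.mk_mem_iff.1 (by rwa [ZFSet.mk_out])
      obtain ⟨a, ha⟩ := h1
      exact ⟨a, by rw [← ZFSet.mk_out t]; exact ZFSet.sound ha⟩
    refine ⟨some ⟨a, posRoot (A a)⟩, ?_⟩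
    show posVal (A a) (posRoot (A a)) = t
    rw [posVal_posRoot, ha]
  | ⟨α, A⟩, some ⟨a, p⟩, t, ht =>
    let ⟨q, hq⟩ := posVal_complete (A a) p t ht
    ⟨some ⟨a, q⟩, hq⟩

/-- The membership relation on positions. -/
def prel (s : PSet.{u}) : Pos s → Pos s → Prop := fun p q => posVal s p ∈ posVal s q

theorem prel_acc : ∀ (s : PSet.{u}) (p : Pos s),
    Relation.ReflTransGen (prel s) p (posRoot s)
  | ⟨_, _⟩, none => Relation.ReflTransGen.refl
  | ⟨α, A⟩, some ⟨a, p⟩ => by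
    have IH := prel_acc (A a) p
    have h1 : Relation.ReflTransGen (prel ⟨α, A⟩) (some ⟨a, p⟩)
        (some ⟨a, posRoot (A a)⟩) :=
      Relation.ReflTransGen.lift (fun q => (some ⟨a, q⟩ : Pos ⟨α, A⟩))
        (fun x y hxy => hxy) _ _ IH
    refine h1.tail ?_
    show posVal (A a) (posRoot (A a)) ∈ ZFSet.mk ⟨α, A⟩
    rw [posVal_posRoot]
    exact ZFSet.mk_mem_iff.2 ⟨a, PSet.Equiv.refl _⟩

/-- The setoid of positions with equal values. -/
def posSetoid (s : PSet.{u}) : Setoid (Pos s) :=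
  ⟨fun p q => posVal s p = posVal s q, ⟨fun _ => rfl, Eq.symm, Eq.trans⟩⟩

/-- The carrier of the apg associated to a pre-set. -/
def OfP (s : PSet.{u}) : Type u := Quotient (posSetoid s)

/-- Value of a node. -/
def ovalF (s : PSet.{u}) : OfP s → ZFSet.{u} := Quotient.lift (posVal s) fun _ _ h => h

/-- The edge relation: membership of values. -/
def orel (s : PSet.{u}) : OfP s → OfP s → Prop := fun x y => ovalF s x ∈ ovalF s y

/-- The root node. -/
def oroot (s : PSet.{u}) : OfP s := Quotient.mk (posSetoid s) (posRoot s)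

theorem ovalF_inj {s : PSet.{u}} {x y : OfP s} (h : ovalF s x = ovalF s y) : x = y := by
  induction x using Quotient.ind with | _ p =>
  induction y using Quotient.ind with | _ q =>
  exact Quotient.sound h

theorem orel_wf (s : PSet.{u}) : WellFounded (orel s) :=
  InvImage.wf (ovalF s) ZFSet.mem_wf

theorem ovalF_complete {s : PSet.{u}} (x : OfP s) {t : ZFSet.{u}} (ht : t ∈ ovalF s x) :
    ∃ c : OfP s, ovalF s c = t := by
  induction x using Quotient.ind with | _ p =>
  obtain ⟨q, hq⟩ := posVal_complete s p t ht
  exact ⟨Quotient.mk _ q, hq⟩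

theorem orel_ext (s : PSet.{u}) : IsExtRel (orel s) := by
  intro x y h
  apply ovalF_inj
  apply ZFSet.ext
  intro t
  constructor
  · intro ht
    obtain ⟨c, hc⟩ := ovalF_complete x ht
    have hcx : orel s c x := by show ovalF s c ∈ ovalF s x; rw [hc]; exact ht
    exact hc ▸ (h c).1 hcx
  · intro ht
    obtain ⟨c, hc⟩ := ovalF_complete y ht
    have hcy : orel s c y := by show ovalF s c ∈ ovalF s y; rw [hc]; exact ht
    exact hc ▸ (h c).2 hcy

theorem orel_acc (s : PSet.{u}) (x : OfP s) :
    Relation.ReflTransGen (orel s) x (oroot s) := by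
  induction x using Quotient.ind with | _ p =>
  exact Relation.ReflTransGen.lift (Quotient.mk (posSetoid s)) (fun a b h => h) _ _ (prel_acc s p)

theorem ofP_toPSet (s : PSet.{u}) (x : OfP s) :
    ZFSet.mk (toPSet (orel s) (orel_wf s) x) = ovalF s x := by
  induction x using (orel_wf s).induction with
  | _ x ih =>
  apply ZFSet.ext
  intro t
  constructor
  · intro ht
    have h1 : t.out ∈ toPSet (orel s) (orel_wf s) x := by
      rw [← ZFSet.mk_mem_iff, ZFSet.mk_out]; exact ht
    obtain ⟨c, hc, he⟩ := mem_toPSet_iff.1 h1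
    have h2 : t = ZFSet.mk (toPSet (orel s) (orel_wf s) c) := by
      rw [← ZFSet.mk_out t]; exact ZFSet.sound he
    rw [h2, ih c hc]
    exact hc
  · intro ht
    obtain ⟨c, hc⟩ := ovalF_complete x ht
    have hrel : orel s c x := by show ovalF s c ∈ ovalF s x; rw [hc]; exact ht
    have h2 : t = ZFSet.mk (toPSet (orel s) (orel_wf s) c) := by rw [ih c hrel, hc]
    rw [h2, ZFSet.mk_mem_iff]
    exact mem_toPSet_iff.2 ⟨c, hrel, PSet.Equiv.refl _⟩

/-- The apg associated to a pre-set. -/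
noncomputable def ofPSet (s : PSet.{u}) : WEApg.{u} where
  carrier := OfP s
  rel := orel s
  root := oroot s
  acc := orel_acc s
  wf := isWFRel_of_wellFounded (orel_wf s)
  ext := orel_ext s

theorem ofPSet_zf (s : PSet.{u}) : (ofPSet s).zf = ZFSet.mk s := by
  have h := ofP_toPSet s (oroot s)
  have h2 : ovalF s (oroot s) = ZFSet.mk s := posVal_posRoot s
  exact h.trans h2

end Aux

/-- Power sets exist for well-founded extensional apgs. -/
theorem weapg_powerset (X : WEApg.{u}) :
    ∃ P : WEApg.{u}, ∀ W : WEApg.{u},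
      W.Mem P ↔ ∀ Z : WEApg.{u}, Z.Mem W → Z.Mem X := by
  refine ⟨ofPSet (ZFSet.powerset X.zf).out, fun W => ?_⟩
  rw [WEApg.mem_iff_zf, ofPSet_zf, ZFSet.mk_out, ZFSet.mem_powerset]
  constructor
  · intro h Z hZ
    exact (WEApg.mem_iff_zf Z X).2 (h ((WEApg.mem_iff_zf Z W).1 hZ))
  · intro h t ht
    have h1 : t.out ∈ toPSet W.rel W.wf' W.root := by
      rw [← ZFSet.mk_mem_iff, ZFSet.mk_out]; exact ht
    obtain ⟨z, hz, he⟩ := mem_toPSet_iff.1 h1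
    have hzf : (W.below z).zf = t := by
      rw [WEApg.below_zf, ← ZFSet.mk_out t]
      exact (ZFSet.sound he).symm
    have h2 := (WEApg.mem_iff_zf (W.below z) X).1 (h (W.below z) (W.below_mem hz))
    rwa [hzf] at h2
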